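/- Let d ≥ 2 and let (A_i)_{i=1}^{d²} be a COB on ℂ^d. Then no element A_i is positive semidefinite; equivalently, every A_i has a strictly negative eigenvalue. -/

import Mathlib

open scoped ComplexOrder

lemma herm_trace_eq (n : ℕ) (B : Matrix (Fin n) (Fin n) ℂ) (hB : B.IsHermitian) :
    B.trace = ∑ k, (hB.eigenvalues k : ℂ) := by
  conv_lhs => rw [hB.spectral_theorem, Unitary.conjStarAlgAut_apply]
  rw [Matrix.trace_mul_cycle,
    (Matrix.mem_unitaryGroup_iff').mp (Matrix.IsHermitian.eigenvectorUnitary hB).2, Matrix.one_mul,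
    Matrix.trace_diagonal]
  rfl

lemma herm_trace_sq_eq (n : ℕ) (B : Matrix (Fin n) (Fin n) ℂ) (hB : B.IsHermitian) :
    (B * B).trace = ∑ k, ((hB.eigenvalues k : ℂ))^2 := by
  set U : Matrix (Fin n) (Fin n) ℂ := (Matrix.IsHermitian.eigenvectorUnitary hB : Matrix (Fin n) (Fin n) ℂ)
  have hU1 : star U * U = 1 :=
    (Matrix.mem_unitaryGroup_iff').mp (Matrix.IsHermitian.eigenvectorUnitary hB).2
  have hU2 : U * star U = 1 :=
    (Matrix.mem_unitaryGroup_iff).mp (Matrix.IsHermitian.eigenvectorUnitary hB).2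
  have hD : star U * B * U = Matrix.diagonal (RCLike.ofReal ∘ hB.eigenvalues) := by
    have := hB.conjStarAlgAut_star_eigenvectorUnitary
    rw [Unitary.conjStarAlgAut_star_apply] at this
    exact this
  have h1 : (B * B).trace = (star U * (B * B) * U).trace := by
    rw [Matrix.trace_mul_cycle, ← Matrix.mul_assoc, hU2, Matrix.one_mul]
  have h2 : star U * (B * B) * U = (star U * B * U) * (star U * B * U) := by
    have hUX : ∀ X : Matrix (Fin n) (Fin n) ℂ, U * (star U * X) = X := fun X => by
      rw [← Matrix.mul_assoc, hU2, Matrix.one_mul]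
    simp only [Matrix.mul_assoc]
    rw [hUX]
  rw [h1, h2, hD, Matrix.diagonal_mul_diagonal, Matrix.trace_diagonal]
  simp [sq]

theorem cob_not_posSemidef (d : ℕ) (hd : 2 ≤ d)
    (A : Fin (d ^ 2) → Matrix (Fin d) (Fin d) ℂ)
    (hherm : ∀ i, (A i).IsHermitian)
    (horth : ∀ i j, (A i * A j).trace = if i = j then (1 / (d : ℂ)) else 0)
    (hsum : ∑ i, A i = 1) :
    ∀ i, ¬ (A i).PosSemidef ∧ ∃ k, (hherm i).eigenvalues k < 0 := by
  intro i
  have hd0 : (0:ℝ) < d := by positivity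
  have htr : (A i).trace = 1 / (d : ℂ) := by
    have : (A i * ∑ j, A j).trace = 1 / (d : ℂ) := by
      rw [Finset.mul_sum, Matrix.trace_sum]
      simp only [horth]
      simp
    rwa [hsum, mul_one] at this
  have htr2 : (A i * A i).trace = 1 / (d : ℂ) := by simp [horth]
  set lam := (hherm i).eigenvalues with hlam
  have hsum1 : ∑ k, lam k = 1 / (d : ℝ) := by
    have := herm_trace_eq d (A i) (hherm i)
    rw [htr] at this
    have := congrArg Complex.re this.symm
    simpa using this
  have hsum2 : ∑ k, (lam k)^2 = 1 / (d : ℝ) := by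
    have := herm_trace_sq_eq d (A i) (hherm i)
    rw [htr2] at this
    have := congrArg Complex.re this.symm
    simpa [← Complex.ofReal_pow] using this
  have key : ∃ k, lam k < 0 := by
    by_contra h
    push_neg at h
    have hle : ∀ k, lam k ≤ 1 / (d : ℝ) := by
      intro k
      rw [← hsum1]
      exact Finset.single_le_sum (fun j _ => h j) (Finset.mem_univ k)
    have hmain : ∑ k, (lam k)^2 ≤ ∑ k, (1 / (d:ℝ)) * lam k := by
      apply Finset.sum_le_sum
      intro k _
      rw [sq]
      exact mul_le_mul_of_nonneg_right (hle k) (h k)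
    rw [hsum2, ← Finset.mul_sum, hsum1] at hmain
    have hd2 : (2:ℝ) ≤ d := by exact_mod_cast hd
    have hpos : 0 < 1/(d:ℝ) := by positivity
    have hhalf : 1/(d:ℝ) ≤ 1/2 := one_div_le_one_div_of_le (by norm_num) hd2
    nlinarith [hmain, hpos, hhalf]
  refine ⟨fun hpsd => ?_, key⟩
  obtain ⟨k, hk⟩ := key
  exact absurd (hpsd.eigenvalues_nonneg k) (not_le.mpr hk)
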